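/- Let Γ be a distance-biregular graph, ℓ ∈ {0,1}, and ℓ̄ = 1 − ℓ. If i, j ≥ 1, i + j is odd, and i + j ≤ D₀, then c_{ℓ,i} ≤ b_{ℓ̄,j} and c_{ℓ̄,i} ≤ b_{ℓ,j}. -/

import Mathlib

open Finset SimpleGraph

lemma walk_parity {V : Type} {G : SimpleGraph V} (σ : V → Fin 2)
    (hbip : ∀ x y : V, G.Adj x y → σ x ≠ σ y) :
    ∀ {x y : V} (p : G.Walk x y), (σ x = σ y ↔ Even p.length) := by
  intro x y p
  induction p with
  | nil => simp
  | @cons u v w h p ih =>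
    have huv := hbip u v h
    have : σ u = σ w ↔ ¬ (σ v = σ w) := by
      revert huv; generalize σ u = a; generalize σ v = b; generalize σ w = c
      revert a b c; decide
    simp only [SimpleGraph.Walk.length_cons, Nat.even_add_one, this, ih]

lemma dist_parity {V : Type} {G : SimpleGraph V} (hconn : G.Connected) (σ : V → Fin 2)
    (hbip : ∀ x y : V, G.Adj x y → σ x ≠ σ y) (x y : V) :
    σ x = σ y ↔ Even (G.dist x y) := by
  obtain ⟨p, hp⟩ := hconn.exists_walk_length_eq_dist x y
  rw [← hp]
  exact walk_parity σ hbip p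

lemma step_down {V : Type} {G : SimpleGraph V} (hconn : G.Connected) {w y : V} {m : ℕ}
    (h : G.dist w y = m + 1) : ∃ w', G.Adj w w' ∧ G.dist w' y = m := by
  obtain ⟨p, hp⟩ := hconn.exists_walk_length_eq_dist w y
  have hlen : p.length = m + 1 := by rw [hp, h]
  have hnil : ¬ p.Nil := by
    rw [SimpleGraph.Walk.not_nil_iff_lt_length, hlen]; omega
  refine ⟨p.getVert 1, SimpleGraph.Walk.adj_snd hnil, ?_⟩
  have h1 : G.dist (p.getVert 1) y ≤ m := by
    have : G.dist (p.getVert 1) y ≤ p.tail.length := SimpleGraph.dist_le p.tail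
    have htl : p.tail.length + 1 = p.length := SimpleGraph.Walk.length_tail_add_one hnil
    omega
  have h2 : G.dist w (p.getVert 1) = 1 :=
    (SimpleGraph.dist_eq_one_iff_adj).mpr (SimpleGraph.Walk.adj_snd hnil)
  have h3 := hconn.dist_triangle (u := w) (v := p.getVert 1) (w := y)
  omega

lemma intermediate {V : Type} {G : SimpleGraph V} (hconn : G.Connected) (x y : V) :
    ∀ s : ℕ, s ≤ G.dist x y → ∃ w, G.dist x w = s ∧ G.dist w y = G.dist x y - s := by
  intro s
  induction s with
  | zero =>
    intro _
    exact ⟨x, by rw [SimpleGraph.dist_self], by omega⟩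
  | succ n ih =>
    intro hs
    obtain ⟨w, hw1, hw2⟩ := ih (by omega)
    have : G.dist w y = (G.dist x y - (n + 1)) + 1 := by omega
    obtain ⟨w', hadj, hw'⟩ := step_down hconn this
    refine ⟨w', ?_, hw'⟩
    have h2 : G.dist w w' = 1 := (SimpleGraph.dist_eq_one_iff_adj).mpr hadj
    have h3 := hconn.dist_triangle (u := x) (v := w) (w := w')
    have h4 := hconn.dist_triangle (u := x) (v := w') (w := y)
    omega

theorem stmt6 {V : Type} [Fintype V] [DecidableEq V]
    (G : SimpleGraph V) [DecidableRel G.Adj]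
    (hconn : G.Connected) (hcard : 2 ≤ Fintype.card V)
    (σ : V → Fin 2)
    (hbip : ∀ x y : V, G.Adj x y → σ x ≠ σ y)
    (k : Fin 2 → ℕ)
    (hdeg : ∀ x : V, G.degree x = k (σ x))
    (c b : Fin 2 → ℕ → ℕ)
    (hc : ∀ (x y : V) (i : ℕ), G.dist x y = i →
      (Finset.univ.filter (fun z => G.dist x z = i - 1 ∧ G.Adj y z)).card = c (σ x) i)
    (hb : ∀ (x y : V) (i : ℕ), G.dist x y = i →
      (Finset.univ.filter (fun z => G.dist x z = i + 1 ∧ G.Adj y z)).card = b (σ x) i)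
    (D : Fin 2 → ℕ)
    (hDub : ∀ x y : V, G.dist x y ≤ D (σ x))
    (hDmax : ∀ ℓ : Fin 2, ∃ x y : V, σ x = ℓ ∧ G.dist x y = D ℓ)
    (hD0 : 1 ≤ D 0) (hD01 : D 0 ≤ D 1) :
    ∀ (ℓ : Fin 2) (i j : ℕ), 1 ≤ i → 1 ≤ j → Odd (i + j) → i + j ≤ D 0 →
      c ℓ i ≤ b (1 - ℓ) j ∧ c (1 - ℓ) i ≤ b ℓ j := by
  intro ℓ i j hi hj hodd hle
  -- core claim: for any x z at distance i+j, c (σ z) i ≤ b (σ x) j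
  have core : ∀ x z : V, G.dist x z = i + j → c (σ z) i ≤ b (σ x) j := by
    intro x z hxz
    obtain ⟨y, hy1, hy2⟩ := intermediate hconn x z j (by omega)
    have hyz : G.dist z y = i := by rw [SimpleGraph.dist_comm]; omega
    rw [← hc z y i hyz, ← hb x y j hy1]
    apply Finset.card_le_card
    intro w hw
    simp only [Finset.mem_filter, Finset.mem_univ, true_and] at hw ⊢
    obtain ⟨hzw, hyw⟩ := hw
    refine ⟨?_, hyw⟩
    have h1 : G.dist y w = 1 := (SimpleGraph.dist_eq_one_iff_adj).mpr hyw
    have h2 := hconn.dist_triangle (u := x) (v := y) (w := w)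
    have h3 := hconn.dist_triangle (u := x) (v := w) (w := z)
    have h4 : G.dist w z = i - 1 := by rw [SimpleGraph.dist_comm]; exact hzw
    omega
  -- for each part value m, produce a pair at distance i+j with σ x = m
  have main : ∀ m : Fin 2, c (1 - m) i ≤ b m j := by
    intro m
    obtain ⟨x, y₀, hσx, hxy₀⟩ := hDmax m
    have hD0m : D 0 ≤ D m := by
      fin_cases m <;> simp_all
    obtain ⟨z, hz1, _⟩ := intermediate hconn x y₀ (i + j) (by omega)
    have hcz := core x z hz1
    have hne : σ x ≠ σ z := by
      intro h
      have := (dist_parity hconn σ hbip x z).mp h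
      rw [hz1] at this
      exact (Nat.not_even_iff_odd.mpr hodd) this
    have hσz : σ z = 1 - m := by
      rw [hσx] at hne
      have h2 : ∀ (m a : Fin 2), m ≠ a → a = 1 - m := by decide
      exact h2 m (σ z) hne
    rw [hσz, hσx] at hcz
    exact hcz
  have h1 := main ℓ
  have h2 := main (1 - ℓ)
  have h3 : ∀ l : Fin 2, 1 - (1 - l) = l := by decide
  rw [h3 ℓ] at h2
  exact ⟨h2, h1⟩
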